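/- Correctness of the width-minimizing dynamic-programming recurrence for the RIPP-C: given rectangles with widths w_1 ≥ w_2 ≥ … and heights h_1 ≥ h_2 ≥ … (h_1 > 0), define G(i,j,k), for integers i,j ≥ 1 and k ≥ 0, as the minimum of W_w(A) over all i×j RC layouts A with H_h(A) ≤ k (G(i,j,k) = +∞ if no such layout exists), with the conventions G(i,j,k) = +∞ whenever i ≤ 0 or j ≤ 0 or k < h_1. Then G(1,1,k) = w_1 for all k ≥ h_1, and for all i,j with i+j ≥ 3 and all k, G(i,j,k) = min{ G(i,j−1,k) + w_{ij−i+1}, G(i−1,j, k − h_{ij−j+1}) }. -/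

import Mathlib

/-- A `p × q` layout: a matrix whose entries are exactly the integers `1, …, p*q`. -/
def IsLayout (p q : ℕ) (A : Fin p → Fin q → ℕ) : Prop :=
  Function.Injective (fun ij : Fin p × Fin q => A ij.1 ij.2) ∧
  (Set.range fun ij : Fin p × Fin q => A ij.1 ij.2) = Set.Icc 1 (p * q)

/-- Width of a layout with respect to side lengths `l`. -/
def layW (l : ℕ → ℕ) {p q : ℕ} (A : Fin p → Fin q → ℕ) : ℕ :=
  ∑ j : Fin q, Finset.univ.sup fun i : Fin p => l (A i j)

/-- Height of a layout with respect to side lengths `l`. -/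
def layH (l : ℕ → ℕ) {p q : ℕ} (A : Fin p → Fin q → ℕ) : ℕ :=
  ∑ i : Fin p, Finset.univ.sup fun j : Fin q => l (A i j)

/-- RC layouts: obtainable from the 1×1 base layout by add-row and add-column operations. -/
inductive IsRC : {p q : ℕ} → (Fin p → Fin q → ℕ) → Prop
  | base : IsRC (fun (_ : Fin 1) (_ : Fin 1) => 1)
  | addRow {p q : ℕ} {A : Fin p → Fin q → ℕ} (h : IsRC A) :
      IsRC (fun (i : Fin (p + 1)) (j : Fin q) =>
        if hi : (i : ℕ) < p then A ⟨i, hi⟩ j else p * q + (j : ℕ) + 1)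
  | addCol {p q : ℕ} {A : Fin p → Fin q → ℕ} (h : IsRC A) :
      IsRC (fun (i : Fin p) (j : Fin (q + 1)) =>
        if hj : (j : ℕ) < q then A i ⟨j, hj⟩ else p * q + (i : ℕ) + 1)

/-- `G(i,j,k)`: the minimum width (w.r.t. widths `w`) of an `i × j` RC layout whose height
(w.r.t. heights `h`) is at most `k` (`⊤` if no such layout exists). -/
noncomputable def Gdp (w h : ℕ → ℕ) (i j k : ℕ) : ℕ∞ :=
  sInf {v : ℕ∞ | ∃ A : Fin i → Fin j → ℕ, IsRC A ∧ layH h A ≤ k ∧ v = (layW w A : ℕ∞)}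


lemma finSup_castSucc {n : ℕ} (f : Fin (n+1) → ℕ) :
    Finset.univ.sup f = (Finset.univ.sup fun j : Fin n => f j.castSucc) ⊔ f (Fin.last n) := by
  rw [Fin.univ_castSuccEmb, Finset.sup_cons, Finset.sup_map]
  rw [sup_comm]
  rfl

lemma isRC_pos {p q : ℕ} {A : Fin p → Fin q → ℕ} (hA : IsRC A) : 1 ≤ p ∧ 1 ≤ q := by
  induction hA with
  | base => exact ⟨le_refl 1, le_refl 1⟩
  | addRow h ih => exact ⟨by omega, ih.2⟩
  | addCol h ih => exact ⟨ih.1, by omega⟩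

lemma isRC_entries {p q : ℕ} {A : Fin p → Fin q → ℕ} (hA : IsRC A) :
    (∃ i j, A i j = 1) ∧ ∀ i j, 1 ≤ A i j ∧ A i j ≤ p * q := by
  induction hA with
  | base => exact ⟨⟨0, 0, rfl⟩, fun i j => by simp⟩
  | @addRow p q A h ih =>
      obtain ⟨⟨i0, j0, hone⟩, hbd⟩ := ih
      constructor
      · refine ⟨⟨i0, by omega⟩, j0, ?_⟩
        simp [i0.isLt, hone]
      · intro i j
        by_cases hi : (i : ℕ) < p
        · beta_reduce
          rw [dif_pos hi]
          exact ⟨(hbd ⟨i, hi⟩ j).1, (hbd ⟨i, hi⟩ j).2.trans (by nlinarith)⟩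
        · beta_reduce
          rw [dif_neg hi]
          have hjq : (j : ℕ) < q := j.isLt
          have he : (p+1) * q = p * q + q := by ring
          omega
  | @addCol p q A h ih =>
      obtain ⟨⟨i0, j0, hone⟩, hbd⟩ := ih
      constructor
      · refine ⟨i0, ⟨j0, by omega⟩, ?_⟩
        simp [j0.isLt, hone]
      · intro i j
        by_cases hj : (j : ℕ) < q
        · beta_reduce
          rw [dif_pos hj]
          exact ⟨(hbd i ⟨j, hj⟩).1, (hbd i ⟨j, hj⟩).2.trans (by nlinarith)⟩
        · beta_reduce
          rw [dif_neg hj]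
          have hiq : (i : ℕ) < p := i.isLt
          have he : p * (q+1) = p * q + p := by ring
          omega

lemma sInf_attained {S : Set ℕ∞} (hS : S.Nonempty)
    (hsub : ∀ v ∈ S, ∃ n : ℕ, v = (n : ℕ∞)) : sInf S ∈ S := by
  obtain ⟨v, hv⟩ := hS
  obtain ⟨n, rfl⟩ := hsub v hv
  set T : Set ℕ := {m | (m : ℕ∞) ∈ S} with hT
  have hTne : T.Nonempty := ⟨n, hv⟩
  have hmem : ((sInf T : ℕ) : ℕ∞) ∈ S := Nat.sInf_mem hTne
  have heq : sInf S = ((sInf T : ℕ) : ℕ∞) := by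
    refine le_antisymm (sInf_le hmem) (le_sInf fun v hv => ?_)
    obtain ⟨m, rfl⟩ := hsub v hv
    exact_mod_cast Nat.sInf_le (show m ∈ T from hv)
  rw [heq]; exact hmem

-- width/height of addCol
lemma layW_addCol (w : ℕ → ℕ) (hw : ∀ a b, 1 ≤ a → a ≤ b → w b ≤ w a)
    {p q : ℕ} (A : Fin p → Fin q → ℕ) (hp : 1 ≤ p) :
    layW w (fun (i : Fin p) (j : Fin (q + 1)) =>
        if hj : (j : ℕ) < q then A i ⟨j, hj⟩ else p * q + (i : ℕ) + 1)
      = layW w A + w (p * q + 1) := by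
  unfold layW
  rw [Fin.sum_univ_castSucc]
  congr 1
  · apply Finset.sum_congr rfl
    intro j _
    congr 1; ext i
    simp [j.isLt]
  · have hle : (Finset.univ.sup fun i : Fin p =>
        w (if hj : ((Fin.last q : Fin (q+1)) : ℕ) < q then A i ⟨_, hj⟩ else p * q + (i:ℕ) + 1))
        = Finset.univ.sup fun i : Fin p => w (p * q + (i:ℕ) + 1) := by
      congr 1; ext i; simp
    rw [hle]
    apply le_antisymm
    · exact Finset.sup_le fun i _ => hw _ _ (by omega) (by omega)
    · exact Finset.le_sup (f := fun i : Fin p => w (p * q + (i:ℕ) + 1)) (Finset.mem_univ (⟨0, hp⟩ : Fin p))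

lemma layH_addCol (h : ℕ → ℕ) (hh : ∀ a b, 1 ≤ a → a ≤ b → h b ≤ h a)
    {p q : ℕ} (A : Fin p → Fin q → ℕ) (hq : 1 ≤ q)
    (hbd : ∀ i j, 1 ≤ A i j ∧ A i j ≤ p * q) :
    layH h (fun (i : Fin p) (j : Fin (q + 1)) =>
        if hj : (j : ℕ) < q then A i ⟨j, hj⟩ else p * q + (i : ℕ) + 1)
      = layH h A := by
  unfold layH
  apply Finset.sum_congr rfl
  intro i _
  rw [finSup_castSucc]
  have h1 : (fun j : Fin q => h (if hj : ((j.castSucc : Fin (q+1)) : ℕ) < q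
      then A i ⟨_, hj⟩ else p * q + (i:ℕ) + 1)) = fun j : Fin q => h (A i j) := by
    ext j; simp [j.isLt]
  rw [h1]
  have h2 : h (if hj : ((Fin.last q : Fin (q+1)) : ℕ) < q then A i ⟨_, hj⟩
      else p * q + (i:ℕ) + 1) = h (p * q + (i:ℕ) + 1) := by simp
  rw [h2]
  have h3 : h (p * q + (i:ℕ) + 1) ≤ Finset.univ.sup fun j : Fin q => h (A i j) := by
    have hj0 := hbd i ⟨0, hq⟩
    calc h (p * q + (i:ℕ) + 1) ≤ h (A i ⟨0, hq⟩) := hh _ _ hj0.1 (by omega)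
      _ ≤ _ := Finset.le_sup (f := fun j : Fin q => h (A i j)) (Finset.mem_univ (⟨0, hq⟩ : Fin q))
  exact sup_eq_left.mpr h3

lemma layH_addRow (h : ℕ → ℕ) (hh : ∀ a b, 1 ≤ a → a ≤ b → h b ≤ h a)
    {p q : ℕ} (A : Fin p → Fin q → ℕ) (hq : 1 ≤ q) :
    layH h (fun (i : Fin (p + 1)) (j : Fin q) =>
        if hi : (i : ℕ) < p then A ⟨i, hi⟩ j else p * q + (j : ℕ) + 1)
      = layH h A + h (p * q + 1) := by
  unfold layH
  rw [Fin.sum_univ_castSucc]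
  congr 1
  · apply Finset.sum_congr rfl
    intro i _
    congr 1; ext j
    simp [i.isLt]
  · have hle : (Finset.univ.sup fun j : Fin q =>
        h (if hi : ((Fin.last p : Fin (p+1)) : ℕ) < p then A ⟨_, hi⟩ j else p * q + (j:ℕ) + 1))
        = Finset.univ.sup fun j : Fin q => h (p * q + (j:ℕ) + 1) := by
      congr 1; ext j; simp
    rw [hle]
    apply le_antisymm
    · exact Finset.sup_le fun j _ => hh _ _ (by omega) (by omega)
    · exact Finset.le_sup (f := fun j : Fin q => h (p * q + (j:ℕ) + 1)) (Finset.mem_univ (⟨0, hq⟩ : Fin q))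

lemma layW_addRow (w : ℕ → ℕ) (hw : ∀ a b, 1 ≤ a → a ≤ b → w b ≤ w a)
    {p q : ℕ} (A : Fin p → Fin q → ℕ) (hp : 1 ≤ p)
    (hbd : ∀ i j, 1 ≤ A i j ∧ A i j ≤ p * q) :
    layW w (fun (i : Fin (p + 1)) (j : Fin q) =>
        if hi : (i : ℕ) < p then A ⟨i, hi⟩ j else p * q + (j : ℕ) + 1)
      = layW w A := by
  unfold layW
  apply Finset.sum_congr rfl
  intro j _
  rw [finSup_castSucc]
  have h1 : (fun i : Fin p => w (if hi : ((i.castSucc : Fin (p+1)) : ℕ) < p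
      then A ⟨_, hi⟩ j else p * q + (j:ℕ) + 1)) = fun i : Fin p => w (A i j) := by
    ext i; simp [i.isLt]
  rw [h1]
  have h2 : w (if hi : ((Fin.last p : Fin (p+1)) : ℕ) < p then A ⟨_, hi⟩ j
      else p * q + (j:ℕ) + 1) = w (p * q + (j:ℕ) + 1) := by simp
  rw [h2]
  have h3 : w (p * q + (j:ℕ) + 1) ≤ Finset.univ.sup fun i : Fin p => w (A i j) := by
    have hi0 := hbd ⟨0, hp⟩ j
    calc w (p * q + (j:ℕ) + 1) ≤ w (A ⟨0, hp⟩ j) := hw _ _ hi0.1 (by omega)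
      _ ≤ _ := Finset.le_sup (f := fun i : Fin p => w (A i j)) (Finset.mem_univ (⟨0, hp⟩ : Fin p))
  exact sup_eq_left.mpr h3

lemma gdp_le {w h : ℕ → ℕ} {i j k : ℕ} {A : Fin i → Fin j → ℕ}
    (hA : IsRC A) (hH : layH h A ≤ k) : Gdp w h i j k ≤ (layW w A : ℕ∞) :=
  sInf_le ⟨A, hA, hH, rfl⟩

lemma le_gdp {w h : ℕ → ℕ} {i j k : ℕ} {c : ℕ∞}
    (hc : ∀ A : Fin i → Fin j → ℕ, IsRC A → layH h A ≤ k → c ≤ (layW w A : ℕ∞)) :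
    c ≤ Gdp w h i j k :=
  le_sInf (by rintro v ⟨A, hA, hH, rfl⟩; exact hc A hA hH)

lemma gdp_attained {w h : ℕ → ℕ} {i j k : ℕ} (hne : Gdp w h i j k ≠ ⊤) :
    ∃ A : Fin i → Fin j → ℕ, IsRC A ∧ layH h A ≤ k ∧ Gdp w h i j k = (layW w A : ℕ∞) := by
  set S := {v : ℕ∞ | ∃ A : Fin i → Fin j → ℕ, IsRC A ∧ layH h A ≤ k ∧ v = (layW w A : ℕ∞)}
    with hSdef
  have hS : S.Nonempty := by
    by_contra hc
    rw [Set.not_nonempty_iff_eq_empty] at hc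
    exact hne (by rw [Gdp, ← hSdef, hc, sInf_empty])
  have hmem : sInf S ∈ S := sInf_attained hS
    (fun v hv => by obtain ⟨A, _, _, rfl⟩ := hv; exact ⟨_, rfl⟩)
  obtain ⟨A, hA, hH, heq⟩ := hmem
  exact ⟨A, hA, hH, heq⟩

/-- Correctness of the width-minimizing dynamic-programming recurrence for
the RIPP-C: `G(i,j,k) = ⊤` when `i = 0`, `j = 0` or `k < h 1`; `G(1,1,k) = w 1` for `k ≥ h 1`;
and for `i, j ≥ 1` with `i + j ≥ 3`,
`G(i,j,k) = min (G(i,j-1,k) + w_{ij-i+1}) (G(i-1,j,k - h_{ij-j+1}))`, the second term being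
`⊤` when `h_{ij-j+1} > k`. -/
theorem ripp_dp_recurrence (w h : ℕ → ℕ)
    (hw : ∀ a b, 1 ≤ a → a ≤ b → w b ≤ w a)
    (hh : ∀ a b, 1 ≤ a → a ≤ b → h b ≤ h a) (hpos : 0 < h 1) :
    (∀ i j k, (i = 0 ∨ j = 0 ∨ k < h 1) → Gdp w h i j k = ⊤) ∧
    (∀ k, h 1 ≤ k → Gdp w h 1 1 k = (w 1 : ℕ∞)) ∧
    (∀ i j k, 1 ≤ i → 1 ≤ j → 3 ≤ i + j →
      Gdp w h i j k =
        min (Gdp w h i (j - 1) k + (w (i * j - i + 1) : ℕ∞))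
          (if h (i * j - j + 1) ≤ k then Gdp w h (i - 1) j (k - h (i * j - j + 1)) else ⊤)) := by
  refine ⟨?_, ?_, ?_⟩
  · -- Part 1
    intro i j k hcase
    refine le_antisymm le_top (le_gdp fun A hA hH => ?_)
    exfalso
    obtain ⟨hp, hq⟩ := isRC_pos hA
    obtain ⟨⟨i0, j0, hone⟩, hbd⟩ := isRC_entries hA
    rcases hcase with h0 | h0 | h0
    · omega
    · omega
    · have h1 : h 1 ≤ Finset.univ.sup fun j' : Fin j => h (A i0 j') := by
        rw [← hone]
        exact Finset.le_sup (f := fun j' : Fin j => h (A i0 j')) (Finset.mem_univ j0)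
      have h2 : (Finset.univ.sup fun j' : Fin j => h (A i0 j')) ≤ layH h A :=
        Finset.single_le_sum
          (f := fun i' : Fin i => Finset.univ.sup fun j' : Fin j => h (A i' j'))
          (fun _ _ => Nat.zero_le _) (Finset.mem_univ i0)
      omega
  · -- Part 2
    intro k hk
    apply le_antisymm
    · have hlayH : layH h (fun (_ : Fin 1) (_ : Fin 1) => 1) ≤ k := by
        simpa [layH, Finset.univ_unique] using hk
      have := gdp_le (w := w) IsRC.base hlayH
      simpa [layW, Finset.univ_unique] using this
    · refine le_gdp fun A hA hH => ?_
      have he : A 0 0 = 1 := by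
        have := (isRC_entries hA).2 0 0
        omega
      have : layW w A = w 1 := by
        simp [layW, Finset.univ_unique, he]
      rw [this]
  · -- Part 3
    intro i j k hi hj hij
    obtain ⟨p, rfl⟩ : ∃ p, i = p + 1 := ⟨i - 1, by omega⟩
    obtain ⟨q, rfl⟩ : ∃ q, j = q + 1 := ⟨j - 1, by omega⟩
    have e1 : (p + 1) * (q + 1) - (p + 1) + 1 = (p + 1) * q + 1 := by
      have : (p+1)*(q+1) = (p+1)*q + (p+1) := by ring
      omega
    have e2 : (p + 1) * (q + 1) - (q + 1) + 1 = p * (q + 1) + 1 := by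
      have : (p+1)*(q+1) = p*(q+1) + (q+1) := by ring
      omega
    rw [e1, e2]
    simp only [Nat.add_sub_cancel]
    apply le_antisymm
    · apply le_min
      · -- ≤ Gdp w h (p+1) q k + w ((p+1)*q+1)
        rcases eq_or_ne (Gdp w h (p + 1) q k) ⊤ with htop | htop
        · rw [htop]; simp
        · obtain ⟨B, hB, hHB, hval⟩ := gdp_attained htop
          have hbd := (isRC_entries hB).2
          have hq1 : 1 ≤ q := (isRC_pos hB).2
          have hW := layW_addCol w hw B (by omega : 1 ≤ p + 1)
          have hH := layH_addCol h hh B hq1 hbd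
          have hle : Gdp w h (p + 1) (q + 1) k
              ≤ ((layW w B + w ((p + 1) * q + 1) : ℕ) : ℕ∞) := by
            rw [← hW]
            exact gdp_le (IsRC.addCol hB) (by rw [hH]; exact hHB)
          refine hle.trans ?_
          rw [hval]
          push_cast
          rfl
      · -- ≤ if-term
        by_cases hcond : h (p * (q + 1) + 1) ≤ k
        · rw [if_pos hcond]
          rcases eq_or_ne (Gdp w h p (q + 1) (k - h (p * (q + 1) + 1))) ⊤ with htop | htop
          · rw [htop]; simp
          · obtain ⟨B, hB, hHB, hval⟩ := gdp_attained htop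
            have hbd := (isRC_entries hB).2
            have hp1 : 1 ≤ p := (isRC_pos hB).1
            have hW := layW_addRow w hw B hp1 hbd
            have hH := layH_addRow h hh B (isRC_pos hB).2
            have hle : Gdp w h (p + 1) (q + 1) k ≤ ((layW w B : ℕ) : ℕ∞) := by
              rw [← hW]
              exact gdp_le (IsRC.addRow hB) (by rw [hH]; omega)
            rw [hval]
            exact hle
        · rw [if_neg hcond]
          exact le_top
    · -- min ≤ Gdp
      refine le_gdp fun A hA hH => ?_
      cases hA with
      | base => omega
      | @addRow p' q' B hB =>
          -- here p' = p, q' = q + 1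
          have hbd := (isRC_entries hB).2
          have hp1 : 1 ≤ p := (isRC_pos hB).1
          have hW := layW_addRow w hw B hp1 hbd
          have hHr := layH_addRow h hh B (isRC_pos hB).2
          rw [hHr] at hH
          have hcond : h (p * (q + 1) + 1) ≤ k := by omega
          rw [if_pos hcond]
          refine (min_le_right _ _).trans ?_
          rw [hW]
          exact gdp_le hB (by omega)
      | @addCol p' q' B hB =>
          have hbd := (isRC_entries hB).2
          have hq1 : 1 ≤ q := (isRC_pos hB).2
          have hW := layW_addCol w hw B (by omega : 1 ≤ p + 1)
          have hHc := layH_addCol h hh B hq1 hbd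
          rw [hHc] at hH
          refine (min_le_left _ _).trans ?_
          rw [hW]
          push_cast
          exact add_le_add (gdp_le hB hH) le_rfl
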